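/- Let γ ∈ (0,1), λ > 0 and δ > 0. Then the weighted half-space bubble integral satisfies ∫_{B⁺_{2δ}} y^{1-2γ} (λ/(1+λ²(y²+|x|²)))^{2-2γ} dy dx ≤ C δ^{2γ} λ^{-(2-2γ)}, where B⁺_{2δ} = {(x,y) ∈ ℝ² × (0,∞) : |x|² + y² < 4δ²} and C depends only on γ. -/

import Mathlib

open MeasureTheory Set intervalIntegral
set_option maxHeartbeats 1000000


lemma oneD_abs {e R : ℝ} (he1 : e < 1) (hR : 0 < R) :
    IntegrableOn (fun t : ℝ => |t| ^ (-e)) (Ioo (-R) R) ∧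
    ∫ t in Ioo (-R) R, |t| ^ (-e) = 2 * (R ^ (1 - e) / (1 - e)) := by
  have hpos : IntervalIntegrable (fun t : ℝ => |t| ^ (-e)) volume 0 R := by
    rw [intervalIntegrable_iff_integrableOn_Ioc_of_le hR.le]
    refine IntegrableOn.congr_fun ?_ (fun t ht => by rw [abs_of_pos ht.1]) measurableSet_Ioc
    exact (intervalIntegrable_iff_integrableOn_Ioc_of_le hR.le).1
      (intervalIntegrable_rpow' (by linarith))
  have hneg : IntervalIntegrable (fun t : ℝ => |t| ^ (-e)) volume (-R) 0 := by
    have := ((IntervalIntegrable.iff_comp_neg enorm_ne_top).mp hpos)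
    simp only [abs_neg, neg_zero] at this
    exact this.symm
  have hII : IntervalIntegrable (fun t : ℝ => |t| ^ (-e)) volume (-R) R :=
    hneg.trans hpos
  have hval_pos : ∫ t in (0:ℝ)..R, |t| ^ (-e) = R ^ (1 - e) / (1 - e) := by
    rw [intervalIntegral.integral_congr (g := fun t : ℝ => t ^ (-e)) ?_]
    · rw [integral_rpow (Or.inl (by linarith))]
      rw [Real.zero_rpow (by linarith)]
      ring_nf
    · intro t ht
      rw [uIcc_of_le hR.le] at ht
      simp [abs_of_nonneg ht.1]
  constructor
  · exact ((intervalIntegrable_iff_integrableOn_Ioc_of_le (by linarith)).1 hII).mono_set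
      Ioo_subset_Ioc_self
  · rw [← integral_Ioc_eq_integral_Ioo, ← intervalIntegral.integral_of_le (by linarith)]
    rw [← intervalIntegral.integral_add_adjacent_intervals hneg hpos]
    have : ∫ t in (-R:ℝ)..0, |t| ^ (-e) = ∫ t in (0:ℝ)..R, |t| ^ (-e) := by
      rw [show (∫ t in (-R:ℝ)..0, |t| ^ (-e)) = ∫ t in (-R:ℝ)..0, |(-t)| ^ (-e) by
        simp [abs_neg]]
      rw [intervalIntegral.integral_comp_neg (fun t : ℝ => |t| ^ (-e))]
      norm_num
    rw [this, hval_pos]; ring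

lemma oneD_pos {α R : ℝ} (hα : -1 < α) (hR : 0 < R) :
    IntegrableOn (fun t : ℝ => t ^ α) (Ioo 0 R) ∧
    ∫ t in Ioo (0:ℝ) R, t ^ α = R ^ (α + 1) / (α + 1) := by
  have hII : IntervalIntegrable (fun t : ℝ => t ^ α) volume 0 R :=
    intervalIntegrable_rpow' hα
  constructor
  · exact ((intervalIntegrable_iff_integrableOn_Ioc_of_le hR.le).1 hII).mono_set
      Ioo_subset_Ioc_self
  · rw [← integral_Ioc_eq_integral_Ioo, ← intervalIntegral.integral_of_le hR.le]
    rw [integral_rpow (Or.inl hα), Real.zero_rpow (by linarith)]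
    ring



lemma key_bound (γ c a b e e' l u v n y : ℝ) (hl : 0 < l) (hy : 0 < y)
    (hu : 0 < u) (hv : 0 < v) (ha0 : 0 ≤ a) (hb0 : 0 ≤ b) (hc0 : 0 < c)
    (hn : n ^ 2 = u ^ 2 + v ^ 2)
    (he : e = 2*b*c) (he' : e' = 1 - 2*γ - 2*a*c) (hab : a + (b + b) = 1) :
    y ^ (1 - 2*γ) * (l / (1 + l ^ 2 * (y ^ 2 + n ^ 2))) ^ c
      ≤ l ^ (-c) * (u ^ (-e) * v ^ (-e) * y ^ e') := by
  set s0 : ℝ := y ^ 2 + n ^ 2 with hs0_def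
  have hs0 : 0 < s0 := by nlinarith [sq_nonneg n, sq_nonneg y]
  have step1 : (l / (1 + l ^ 2 * s0)) ^ c ≤ l ^ (-c) * s0 ^ (-c) := by
    have h1 : l / (1 + l ^ 2 * s0) ≤ (l * s0)⁻¹ := by
      rw [inv_eq_one_div, div_le_div_iff₀ (by positivity) (by positivity)]
      nlinarith
    calc (l / (1 + l ^ 2 * s0)) ^ c ≤ ((l * s0)⁻¹) ^ c :=
          Real.rpow_le_rpow (by positivity) h1 hc0.le
      _ = (l * s0) ^ (-c) := by
          rw [Real.inv_rpow (by positivity), ← Real.rpow_neg (by positivity)]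
      _ = l ^ (-c) * s0 ^ (-c) := Real.mul_rpow hl.le hs0.le
  have hprod : y ^ (2*a) * (u ^ (2*b) * v ^ (2*b)) ≤ s0 := by
    have h1 : y ^ (2*a) ≤ s0 ^ a := by
      have hy2 : y ^ (2:ℝ) ≤ s0 := by rw [Real.rpow_two]; nlinarith [sq_nonneg n]
      calc y ^ (2*a) = (y ^ (2:ℝ)) ^ a := by rw [← Real.rpow_mul hy.le]
        _ ≤ s0 ^ a := Real.rpow_le_rpow (by positivity) hy2 ha0
    have h2 : u ^ (2*b) ≤ s0 ^ b := by
      have hx2 : u ^ (2:ℝ) ≤ s0 := by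
        rw [Real.rpow_two]; nlinarith [sq_nonneg v, sq_nonneg y]
      calc u ^ (2*b) = (u ^ (2:ℝ)) ^ b := by rw [← Real.rpow_mul hu.le]
        _ ≤ s0 ^ b := Real.rpow_le_rpow (by positivity) hx2 hb0
    have h3 : v ^ (2*b) ≤ s0 ^ b := by
      have hx2 : v ^ (2:ℝ) ≤ s0 := by
        rw [Real.rpow_two]; nlinarith [sq_nonneg u, sq_nonneg y]
      calc v ^ (2*b) = (v ^ (2:ℝ)) ^ b := by rw [← Real.rpow_mul hv.le]
        _ ≤ s0 ^ b := Real.rpow_le_rpow (by positivity) hx2 hb0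
    calc y ^ (2*a) * (u ^ (2*b) * v ^ (2*b))
        ≤ s0 ^ a * (s0 ^ b * s0 ^ b) :=
          mul_le_mul h1 (mul_le_mul h2 h3 (Real.rpow_nonneg hv.le _)
            (Real.rpow_nonneg hs0.le _)) (by positivity) (Real.rpow_nonneg hs0.le _)
      _ = s0 ^ (a + (b + b)) := by rw [Real.rpow_add hs0, Real.rpow_add hs0]
      _ = s0 := by rw [hab, Real.rpow_one]
  have step2 : s0 ^ (-c) ≤ (y ^ (2*a) * (u ^ (2*b) * v ^ (2*b))) ^ (-c) :=
    Real.rpow_le_rpow_of_nonpos (by positivity) hprod (by linarith)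
  have hexp : (y ^ (2*a) * (u ^ (2*b) * v ^ (2*b))) ^ (-c)
      = y ^ (2*a*(-c)) * (u ^ (-e) * v ^ (-e)) := by
    rw [Real.mul_rpow (by positivity) (by positivity),
      Real.mul_rpow (by positivity) (by positivity),
      ← Real.rpow_mul hy.le, ← Real.rpow_mul hu.le, ← Real.rpow_mul hv.le,
      show 2*b*(-c) = -e by rw [he]; ring]
  calc y ^ (1 - 2*γ) * (l / (1 + l ^ 2 * s0)) ^ c
      ≤ y ^ (1 - 2*γ) * (l ^ (-c) * ((y ^ (2*a) * (u ^ (2*b) * v ^ (2*b))) ^ (-c))) := by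
        apply mul_le_mul_of_nonneg_left ?_ (Real.rpow_nonneg hy.le _)
        exact le_trans step1 (mul_le_mul_of_nonneg_left step2 (Real.rpow_nonneg hl.le _))
    _ = l ^ (-c) * (u ^ (-e) * v ^ (-e) * y ^ e') := by
        rw [hexp, show e' = (1 - 2*γ) + 2*a*(-c) by rw [he']; ring,
          Real.rpow_add hy]
        ring

section main

local notation "E" => EuclideanSpace ℝ (Fin 2)

noncomputable def ψ: E ≃ᵐ ℝ × ℝ :=
  (MeasurableEquiv.toLp 2 (Fin 2 → ℝ)).symm.trans (MeasurableEquiv.piFinTwo fun _ => ℝ)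

lemma ψ_mp : MeasurePreserving ψ volume volume :=
  (volume_preserving_piFinTwo fun _ => ℝ).comp
    (EuclideanSpace.volume_preserving_symm_measurableEquiv_toLp (Fin 2))

lemma ψ_apply (x : E) : ψ x = (x 0, x 1) := rfl

theorem stmt6 (γ : ℝ) (hγ : γ ∈ Set.Ioo (0 : ℝ) 1) :
    ∃ C > (0 : ℝ), ∀ l δ : ℝ, 0 < l → 0 < δ →
      (∫ p in {p : EuclideanSpace ℝ (Fin 2) × ℝ | ‖p.1‖ ^ 2 + p.2 ^ 2 < (2 * δ) ^ 2 ∧ 0 < p.2},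
          p.2 ^ (1 - 2 * γ) * (l / (1 + l ^ 2 * (p.2 ^ 2 + ‖p.1‖ ^ 2))) ^ (2 - 2 * γ))
        ≤ C * δ ^ (2 * γ) * l ^ (-(2 - 2 * γ)) := by
  obtain ⟨hγ0, hγ1⟩ := hγ
  set c : ℝ := 2 - 2 * γ with hc_def
  have hc0 : 0 < c := by simp only [hc_def]; linarith
  have hc2 : c < 2 := by simp only [hc_def]; linarith
  set a : ℝ := (max (1 - 1/c) 0 + 1/2) / 2 with ha_def
  have hmax_lt : max (1 - 1/c) 0 < 1/2 := by
    apply max_lt _ (by norm_num)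
    have h2 : (1:ℝ)/2 < 1/c := by
      rw [div_lt_div_iff₀ (by norm_num) hc0]; linarith
    linarith
  have ha0 : 0 ≤ a := by
    have := le_max_right (1 - 1/c) 0
    simp only [ha_def]; linarith
  have ha2 : a < 1/2 := by simp only [ha_def]; linarith
  have haL : 1 - 1/c < a := by
    have h1 := le_max_left (1 - 1/c) 0
    simp only [ha_def]; linarith
  set b : ℝ := (1 - a) / 2 with hb_def
  have hb0 : 0 < b := by simp only [hb_def]; linarith
  set e : ℝ := 2 * b * c with he_def
  have he0 : 0 < e := by positivity
  have he1 : e < 1 := by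
    have h1 : 1 - a < 1/c := by linarith
    have h2 : (1 - a) * c < (1/c) * c := mul_lt_mul_of_pos_right h1 hc0
    rw [one_div, inv_mul_cancel₀ hc0.ne'] at h2
    have h3 : e = (1 - a) * c := by simp only [he_def, hb_def]; ring
    rw [h3]; exact h2
  set e' : ℝ := 1 - 2*γ - 2*a*c with he'_def
  have hα : -1 < e' := by
    have h1 : 0 < c * (1 - 2*a) := mul_pos hc0 (by linarith)
    simp only [he'_def, hc_def] at *; nlinarith
  set C : ℝ := 4 / ((1 - e)^2 * (e' + 1)) * 2 ^ (2*γ) with hC_def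
  have he'1 : 0 < e' + 1 := by linarith
  have he1' : 0 < 1 - e := by linarith
  have hC : 0 < C := by
    have h2 : (0:ℝ) < 2 ^ (2*γ) := Real.rpow_pos_of_pos (by norm_num) _
    positivity
  clear_value c a b e e' C
  refine ⟨C, hC, ?_⟩
  intro l δ hl hδ
  set R : ℝ := 2 * δ with hR_def
  have hR : 0 < R := by positivity
  clear_value R
  have hnorm_sq : ∀ x : E, ‖x‖ ^ 2 = (x 0) ^ 2 + (x 1) ^ 2 := by
    intro x
    rw [EuclideanSpace.norm_eq, Real.sq_sqrt (Finset.sum_nonneg fun i _ => sq_nonneg _)]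
    simp [Fin.sum_univ_two, Real.norm_eq_abs, sq_abs]
  -- sets
  set s : Set (E × ℝ) :=
    {p : E × ℝ | ‖p.1‖ ^ 2 + p.2 ^ 2 < R ^ 2 ∧ 0 < p.2} with hs_def
  have hs_meas : MeasurableSet s := by
    apply MeasurableSet.inter
    · exact measurableSet_lt ((measurable_fst.norm.pow_const 2).add
        (measurable_snd.pow_const 2)) measurable_const
    · exact measurableSet_lt measurable_const measurable_snd
  set V : Set (ℝ × ℝ) := Ioo (-R) R ×ˢ Ioo (-R) R with hV_def
  set U : Set E := ψ ⁻¹' V with hU_def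
  have hV_meas : MeasurableSet V := (measurableSet_Ioo).prod measurableSet_Ioo
  have hU_meas : MeasurableSet U := ψ.measurable hV_meas
  set T : Set (E × ℝ) := U ×ˢ Ioo 0 R with hT_def
  have hT_meas : MeasurableSet T := hU_meas.prod measurableSet_Ioo
  -- functions
  set W : ℝ × ℝ → ℝ := fun z => |z.1| ^ (-e) * |z.2| ^ (-e) with hW_def
  set G : E × ℝ → ℝ := fun p => W (ψ p.1) * p.2 ^ e' with hG_def
  obtain ⟨hJint, hJval⟩ := oneD_abs he1 hR
  obtain ⟨hYint, hYval⟩ := oneD_pos hα hR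
  have hWint : IntegrableOn W V := by
    rw [IntegrableOn, hV_def, Measure.volume_eq_prod, ← Measure.prod_restrict]
    exact hJint.mul_prod hJint
  have hWval : ∫ z in V, W z = (2 * (R ^ (1 - e) / (1 - e)))^2 := by
    have key := setIntegral_prod_mul (μ := volume) (ν := volume)
      (fun t : ℝ => |t| ^ (-e)) (fun t : ℝ => |t| ^ (-e)) (Ioo (-R) R) (Ioo (-R) R)
    rw [hV_def, hW_def, Measure.volume_eq_prod]
    simp only []
    rw [key, hJval]; ring
  have hUint : IntegrableOn (fun x : E => W (ψ x)) U := by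
    rw [IntegrableOn, ← ψ_mp.map_eq, Measure.restrict_map ψ.measurable hV_meas,
      ψ.measurableEmbedding.integrable_map_iff] at hWint
    exact hWint
  have hUval : ∫ x in U, W (ψ x) = (2 * (R ^ (1 - e) / (1 - e)))^2 := by
    rw [← hWval, ← ψ_mp.map_eq, Measure.restrict_map ψ.measurable hV_meas,
      ψ.measurableEmbedding.integral_map]
  have hGint : IntegrableOn G T := by
    rw [IntegrableOn, hT_def, Measure.volume_eq_prod, ← Measure.prod_restrict]
    exact hUint.mul_prod hYint
  have hGval : ∫ p in T, G p
      = (2 * (R ^ (1 - e) / (1 - e)))^2 * (R ^ (e' + 1) / (e' + 1)) := by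
    have key := setIntegral_prod_mul (μ := volume) (ν := volume)
      (fun x : E => W (ψ x)) (fun y : ℝ => y ^ e') U (Ioo 0 R)
    rw [hT_def, hG_def, Measure.volume_eq_prod]
    simp only []
    rw [key, hUval, hYval]
  -- inclusion of the half ball into the box
  have hsT : s ⊆ T := by
    rintro p ⟨h1, h2⟩
    have hn := hnorm_sq p.1
    have hx0 : (p.1 0) ^ 2 < R ^ 2 := by nlinarith [sq_nonneg (p.1 1)]
    have hx1 : (p.1 1) ^ 2 < R ^ 2 := by nlinarith [sq_nonneg (p.1 0)]
    refine ⟨?_, h2, by nlinarith⟩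
    rw [hU_def, mem_preimage, ψ_apply, hV_def]
    exact ⟨⟨by nlinarith, by nlinarith⟩, ⟨by nlinarith, by nlinarith⟩⟩
  -- almost everywhere, coordinates are nonzero
  have hnull0 : volume {x : E | x 0 = 0} = 0 := by
    have hEq : {x : E | x 0 = 0} = ψ ⁻¹' (({0} : Set ℝ) ×ˢ univ) := by
      ext x; simp [ψ_apply, eq_comm]
    rw [hEq, ψ_mp.measure_preimage
        (((measurableSet_singleton (0:ℝ)).prod MeasurableSet.univ).nullMeasurableSet),
      Measure.volume_eq_prod, Measure.prod_prod, Real.volume_singleton, zero_mul]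
  have hnull1 : volume {x : E | x 1 = 0} = 0 := by
    have hEq : {x : E | x 1 = 0} = ψ ⁻¹' ((univ : Set ℝ) ×ˢ ({0} : Set ℝ)) := by
      ext x; simp [ψ_apply, eq_comm]
    rw [hEq, ψ_mp.measure_preimage
        ((MeasurableSet.univ.prod (measurableSet_singleton (0:ℝ))).nullMeasurableSet),
      Measure.volume_eq_prod, Measure.prod_prod, Real.volume_singleton, mul_zero]
  have hae : ∀ᵐ p : E × ℝ, p.1 0 ≠ 0 ∧ p.1 1 ≠ 0 := by
    have h0 : volume {p : E × ℝ | p.1 0 = 0} = 0 := by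
      have : {p : E × ℝ | p.1 0 = 0} = {x : E | x 0 = 0} ×ˢ univ := by ext p; simp
      rw [this, Measure.volume_eq_prod, Measure.prod_prod, hnull0, zero_mul]
    have h1 : volume {p : E × ℝ | p.1 1 = 0} = 0 := by
      have : {p : E × ℝ | p.1 1 = 0} = {x : E | x 1 = 0} ×ˢ univ := by ext p; simp
      rw [this, Measure.volume_eq_prod, Measure.prod_prod, hnull1, zero_mul]
    rw [ae_iff]
    refine measure_mono_null (fun p hp => ?_) (measure_union_null h0 h1)
    simp only [mem_setOf_eq, not_and_or, not_not] at hp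
    exact hp.elim (fun h => Or.inl h) (fun h => Or.inr h)
  -- the pointwise bound
  have hkey : ∀ (x : E) (y : ℝ), 0 < y → x 0 ≠ 0 → x 1 ≠ 0 →
      y ^ (1 - 2*γ) * (l / (1 + l ^ 2 * (y ^ 2 + ‖x‖ ^ 2))) ^ c
        ≤ l ^ (-c) * (W (ψ x) * y ^ e') := by
    intro x y hy hx0 hx1
    have h := key_bound γ c a b e e' l (|x 0|) (|x 1|) ‖x‖ y hl hy
      (abs_pos.mpr hx0) (abs_pos.mpr hx1) ha0 hb0.le hc0
      (by rw [hnorm_sq x, sq_abs, sq_abs]) he_def he'_def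
      (by simp only [hb_def]; ring)
    simpa only [hW_def, ψ_apply] using h
  -- nonnegativity on s
  have hF0 : 0 ≤ᵐ[volume.restrict s]
      fun p : E × ℝ => p.2 ^ (1 - 2*γ) * (l / (1 + l ^ 2 * (p.2 ^ 2 + ‖p.1‖ ^ 2))) ^ c := by
    filter_upwards [ae_restrict_mem hs_meas] with p hp
    have hy : 0 < p.2 := hp.2
    have h1 : (0:ℝ) ≤ l / (1 + l ^ 2 * (p.2 ^ 2 + ‖p.1‖ ^ 2)) := by positivity
    exact mul_nonneg (Real.rpow_nonneg hy.le _) (Real.rpow_nonneg h1 _)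
  have hFG : (fun p : E × ℝ => p.2 ^ (1 - 2*γ) * (l / (1 + l ^ 2 * (p.2 ^ 2 + ‖p.1‖ ^ 2))) ^ c)
      ≤ᵐ[volume.restrict s] fun p => l ^ (-c) * G p := by
    filter_upwards [ae_restrict_mem hs_meas, ae_restrict_of_ae hae] with p hp hp'
    exact hkey p.1 p.2 hp.2 hp'.1 hp'.2
  have hGs : Integrable (fun p : E × ℝ => l ^ (-c) * G p) (volume.restrict s) :=
    Integrable.const_mul (hGint.mono_set hsT) _
  have hTnn : 0 ≤ᵐ[volume.restrict T] fun p : E × ℝ => l ^ (-c) * G p := by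
    filter_upwards [ae_restrict_mem hT_meas] with p hp
    have hy : 0 < p.2 := hp.2.1
    have hW0 : 0 ≤ W (ψ p.1) := by
      simp only [hW_def]
      exact mul_nonneg (Real.rpow_nonneg (abs_nonneg _) _) (Real.rpow_nonneg (abs_nonneg _) _)
    exact mul_nonneg (Real.rpow_nonneg hl.le _)
      (mul_nonneg hW0 (Real.rpow_nonneg hy.le _))
  have harith : (2 * (R ^ (1 - e) / (1 - e))) ^ 2 * (R ^ (e' + 1) / (e' + 1))
      = C * δ ^ (2*γ) := by
    have hexp_eq : (1 - e) + (1 - e) + (e' + 1) = 2*γ := by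
      simp only [he_def, hb_def, he'_def, hc_def]; ring
    have h1 : R ^ (1 - e) * R ^ (1 - e) * R ^ (e' + 1) = R ^ (2*γ) := by
      rw [← Real.rpow_add hR, ← Real.rpow_add hR, hexp_eq]
    have h2 : R ^ (2*γ) = 2 ^ (2*γ) * δ ^ (2*γ) := by
      rw [hR_def, Real.mul_rpow (by norm_num) hδ.le]
    calc (2 * (R ^ (1 - e) / (1 - e))) ^ 2 * (R ^ (e' + 1) / (e' + 1))
        = 4 * (R ^ (1 - e) * R ^ (1 - e) * R ^ (e' + 1)) / ((1 - e) ^ 2 * (e' + 1)) := by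
          field_simp [he1'.ne', he'1.ne']
          ring
      _ = 4 * (2 ^ (2*γ) * δ ^ (2*γ)) / ((1 - e) ^ 2 * (e' + 1)) := by rw [h1, h2]
      _ = C * δ ^ (2*γ) := by rw [hC_def]; ring
  calc (∫ p in s, p.2 ^ (1 - 2*γ) * (l / (1 + l ^ 2 * (p.2 ^ 2 + ‖p.1‖ ^ 2))) ^ c)
      ≤ ∫ p in s, l ^ (-c) * G p := integral_mono_of_nonneg hF0 hGs hFG
    _ ≤ ∫ p in T, l ^ (-c) * G p :=
        setIntegral_mono_set (Integrable.const_mul hGint _) hTnn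
          (HasSubset.Subset.eventuallyLE hsT)
    _ = l ^ (-c) * ∫ p in T, G p := by
        rw [MeasureTheory.integral_const_mul]
    _ = C * δ ^ (2*γ) * l ^ (-c) := by rw [hGval, harith]; ring


end main
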